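/- arXiv:1804.01442 — 2 statements merged into one kernel-verified Lean document; each statement's English description precedes it below -/
import Mathlib

section
/- For real numbers a, t with 1 < a < t, set m₂ = t²(a²−1)/(a²(t²−1)). Then I₂(a,a;t) + I₄(a,a;t) = 2·K(m₂)/√(t²−1), i.e. ∫_{-a}^{-1} √((a−z)/((t²−z²)(z²−1)(z+a))) dz + ∫_{1}^{a} √((a−z)/((t²−z²)(z²−1)(z+a))) dz = (2/√(t²−1))·∫₀^{π/2} dθ/√(1 − m₂·sin²θ). -/
open MeasureTheory intervalIntegral Real Filter Topology

/-- Period integral `I₁`. -/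
noncomputable def I1 (a b t : ℝ) : ℝ :=
  ∫ z in (-t)..(-a), Real.sqrt ((b - z) / ((t ^ 2 - z ^ 2) * (z ^ 2 - 1) * (-z - a)))

/-- Period integral `J₁`. -/
noncomputable def J1 (a b t : ℝ) : ℝ :=
  ∫ z in (-t)..(-a), Real.sqrt ((-z - a) / ((t ^ 2 - z ^ 2) * (z ^ 2 - 1) * (b - z)))

/-- Period integral `I₂`. -/
noncomputable def I2 (a b t : ℝ) : ℝ :=
  ∫ z in (-a)..(-1), Real.sqrt ((b - z) / ((t ^ 2 - z ^ 2) * (z ^ 2 - 1) * (z + a)))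

/-- Period integral `J₂`. -/
noncomputable def J2 (a b t : ℝ) : ℝ :=
  ∫ z in (-a)..(-1), Real.sqrt ((z + a) / ((t ^ 2 - z ^ 2) * (z ^ 2 - 1) * (b - z)))

/-- Period integral `I₄`. -/
noncomputable def I4 (a b t : ℝ) : ℝ :=
  ∫ z in (1:ℝ)..b, Real.sqrt ((b - z) / ((t ^ 2 - z ^ 2) * (z ^ 2 - 1) * (z + a)))

/-- Period integral `J₄`. -/
noncomputable def J4 (a b t : ℝ) : ℝ :=
  ∫ z in (1:ℝ)..b, Real.sqrt ((z + a) / ((t ^ 2 - z ^ 2) * (z ^ 2 - 1) * (b - z)))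

/-- Period integral `I₅`. -/
noncomputable def I5 (a b t : ℝ) : ℝ :=
  ∫ z in b..t, Real.sqrt ((z - b) / ((t ^ 2 - z ^ 2) * (z ^ 2 - 1) * (z + a)))

/-- Period integral `J₅`. -/
noncomputable def J5 (a b t : ℝ) : ℝ :=
  ∫ z in b..t, Real.sqrt ((z + a) / ((t ^ 2 - z ^ 2) * (z ^ 2 - 1) * (z - b)))

/-- The period quotient `Q(a,b;t)`. -/
noncomputable def Q (a b t : ℝ) : ℝ :=
  (I1 a b t + I5 a b t) / (I2 a b t + I4 a b t)
    - (J1 a b t + J5 a b t) / (J2 a b t + J4 a b t)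

/-- Complete elliptic integral of the first kind `K(m)`. -/
noncomputable def Kint (m : ℝ) : ℝ :=
  ∫ θ in (0:ℝ)..(π / 2), 1 / Real.sqrt (1 - m * Real.sin θ ^ 2)

/-- Complete elliptic integral of the second kind `E(m)`. -/
noncomputable def Eint (m : ℝ) : ℝ :=
  ∫ θ in (0:ℝ)..(π / 2), Real.sqrt (1 - m * Real.sin θ ^ 2)

section Stmt15Aux
open Set
variable {a t θ : ℝ}

noncomputable def Df (a θ : ℝ) : ℝ := a ^ 2 - (a ^ 2 - 1) * Real.sin θ ^ 2
noncomputable def zf (a θ : ℝ) : ℝ := a / Real.sqrt (Df a θ)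
noncomputable def zd (a θ : ℝ) : ℝ :=
  a * (a ^ 2 - 1) * (Real.sin θ * Real.cos θ) / (Df a θ * Real.sqrt (Df a θ))

variable {a t : ℝ}

lemma Df_ge_one (ha : 1 < a) (θ : ℝ) : 1 ≤ Df a θ := by
  have h1 : Real.sin θ ^ 2 ≤ 1 := Real.sin_sq_le_one θ
  have h0 : (0:ℝ) ≤ Real.sin θ ^ 2 := sq_nonneg _
  have : 0 ≤ (a ^ 2 - 1) * (1 - Real.sin θ ^ 2) := mul_nonneg (by nlinarith) (by linarith)
  unfold Df; nlinarith

lemma Df_le (ha : 1 < a) (θ : ℝ) : Df a θ ≤ a ^ 2 := by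
  have h0 : (0:ℝ) ≤ Real.sin θ ^ 2 := sq_nonneg _
  have : 0 ≤ (a ^ 2 - 1) * Real.sin θ ^ 2 := mul_nonneg (by nlinarith) h0
  unfold Df; nlinarith

lemma Df_pos (ha : 1 < a) (θ : ℝ) : 0 < Df a θ := lt_of_lt_of_le one_pos (Df_ge_one ha θ)

lemma sqrtDf_pos (ha : 1 < a) (θ : ℝ) : 0 < Real.sqrt (Df a θ) :=
  Real.sqrt_pos.mpr (Df_pos ha θ)

lemma sqrtDf_ge_one (ha : 1 < a) (θ : ℝ) : 1 ≤ Real.sqrt (Df a θ) := by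
  have := Real.sqrt_le_sqrt (Df_ge_one ha θ)
  simpa using this

lemma sqrtDf_le (ha : 1 < a) (θ : ℝ) : Real.sqrt (Df a θ) ≤ a := by
  have := Real.sqrt_le_sqrt (Df_le ha θ)
  rwa [Real.sqrt_sq (by linarith : (0:ℝ) ≤ a)] at this

lemma zf_mem_Icc (ha : 1 < a) (θ : ℝ) : zf a θ ∈ Icc 1 a := by
  have h1 := sqrtDf_ge_one ha θ
  have h2 := sqrtDf_le ha θ
  have h0 := sqrtDf_pos ha θ
  unfold zf
  constructor
  · rw [le_div_iff₀ h0]; linarith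
  · rw [div_le_iff₀ h0]; nlinarith

lemma zf_cont (ha : 1 < a) : Continuous (zf a) := by
  apply Continuous.div continuous_const
  · exact (Continuous.sub continuous_const (continuous_const.mul ((Real.continuous_sin).pow 2))).sqrt
  · intro θ; exact ne_of_gt (sqrtDf_pos ha θ)

lemma zf_hasDerivAt (ha : 1 < a) (θ : ℝ) : HasDerivAt (zf a) (zd a θ) θ := by
  have hD : HasDerivAt (Df a) (-((a ^ 2 - 1) * (2 * Real.sin θ ^ 1 * Real.cos θ))) θ := by
    have h1 : HasDerivAt (fun x => Real.sin x ^ 2) (2 * Real.sin θ ^ 1 * Real.cos θ) θ :=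
      (Real.hasDerivAt_sin θ).pow 2
    change HasDerivAt (fun x => a ^ 2 - (a ^ 2 - 1) * Real.sin x ^ 2) _ θ
    simpa using (h1.const_mul (a ^ 2 - 1)).const_sub (a ^ 2)
  have hDpos := Df_pos ha θ
  have hS0 : Real.sqrt (Df a θ) ≠ 0 := ne_of_gt (sqrtDf_pos ha θ)
  have hs : HasDerivAt (fun x => Real.sqrt (Df a x))
      (-((a ^ 2 - 1) * (2 * Real.sin θ ^ 1 * Real.cos θ)) / (2 * Real.sqrt (Df a θ))) θ :=
    hD.sqrt (ne_of_gt hDpos)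
  have hdiv : HasDerivAt (fun x => a / Real.sqrt (Df a x)) _ θ := (hasDerivAt_const θ a).div hs hS0
  refine hdiv.congr_deriv ?_
  have hsq : Real.sqrt (Df a θ) ^ 2 = Df a θ := Real.sq_sqrt hDpos.le
  rw [zd]
  rw [← hsq]
  field_simp
  simp only [hsq]
  ring

lemma zf_zero (ha : 1 < a) : zf a 0 = 1 := by
  have h0 : (0:ℝ) < a := by linarith
  simp [zf, Df, Real.sqrt_sq h0.le, div_self h0.ne']

lemma zf_pi2 (ha : 1 < a) : zf a (π / 2) = a := by
  simp [zf, Df, Real.sin_pi_div_two]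

lemma sin_mem (hθ : θ ∈ Ioo 0 (π / 2)) : Real.sin θ ∈ Ioo (0:ℝ) 1 := by
  obtain ⟨h1, h2⟩ := hθ
  constructor
  · exact Real.sin_pos_of_pos_of_lt_pi h1 (h2.trans (by linarith [Real.pi_pos]))
  · have := Real.strictMonoOn_sin
      (show θ ∈ Icc (-(π/2)) (π/2) from ⟨by linarith [Real.pi_pos], h2.le⟩)
      (show π/2 ∈ Icc (-(π/2)) (π/2) from ⟨by linarith [Real.pi_pos], le_refl _⟩) h2
    simpa [Real.sin_pi_div_two] using this

lemma Df_lt (ha : 1 < a) (hθ : θ ∈ Ioo 0 (π / 2)) : 1 < Df a θ ∧ Df a θ < a ^ 2 := by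
  obtain ⟨hs0, hs1⟩ := sin_mem hθ
  have hs2 : Real.sin θ ^ 2 < 1 := by nlinarith
  have hs2' : 0 < Real.sin θ ^ 2 := by positivity
  have h1 : (0:ℝ) < a ^ 2 - 1 := by nlinarith
  unfold Df
  constructor <;> nlinarith

lemma zf_mem_Ioo (ha : 1 < a) (hθ : θ ∈ Ioo 0 (π / 2)) : zf a θ ∈ Ioo 1 a := by
  obtain ⟨hD1, hDa⟩ := Df_lt ha hθ
  have hS0 := sqrtDf_pos ha θ
  have hS1 : 1 < Real.sqrt (Df a θ) := by
    rw [show (1:ℝ) = Real.sqrt 1 from (Real.sqrt_one).symm]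
    exact Real.sqrt_lt_sqrt (by norm_num) hD1
  have hSa : Real.sqrt (Df a θ) < a := by
    have := Real.sqrt_lt_sqrt (by positivity) hDa
    rwa [Real.sqrt_sq (by linarith : (0:ℝ) ≤ a)] at this
  unfold zf
  constructor
  · rw [lt_div_iff₀ hS0]; linarith
  · rw [div_lt_iff₀ hS0]; nlinarith

lemma zf_inj (ha : 1 < a) : InjOn (zf a) (Ioo 0 (π / 2)) := by
  intro x hx y hy hxy
  have hax : (0:ℝ) < a := by linarith
  unfold zf at hxy
  have hSx := sqrtDf_pos ha x
  have hSy := sqrtDf_pos ha y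
  have hsq : Real.sqrt (Df a x) = Real.sqrt (Df a y) := by
    rw [div_eq_div_iff hSx.ne' hSy.ne'] at hxy
    have := mul_left_cancel₀ hax.ne' hxy
    linarith
  have hD : Df a x = Df a y := by
    have := congrArg (· ^ 2) hsq
    simpa [Real.sq_sqrt (Df_pos ha x).le, Real.sq_sqrt (Df_pos ha y).le] using this
  have hs2 : Real.sin x ^ 2 = Real.sin y ^ 2 := by
    have h1 : (0:ℝ) < a ^ 2 - 1 := by nlinarith
    unfold Df at hD
    have h2 : (a ^ 2 - 1) * Real.sin x ^ 2 = (a ^ 2 - 1) * Real.sin y ^ 2 := by linarith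
    exact mul_left_cancel₀ h1.ne' h2
  have hsin : Real.sin x = Real.sin y := by
    have h0x := (sin_mem hx).1
    have h0y := (sin_mem hy).1
    nlinarith
  exact Real.injOn_sin ⟨by linarith [Real.pi_pos, hx.1], by linarith [hx.2]⟩
    ⟨by linarith [Real.pi_pos, hy.1], by linarith [hy.2]⟩ hsin

lemma zf_image (ha : 1 < a) : zf a '' Ioo 0 (π / 2) = Ioo 1 a := by
  apply Subset.antisymm
  · rintro _ ⟨θ, hθ, rfl⟩; exact zf_mem_Ioo ha hθ
  · have h := intermediate_value_Ioo (by positivity : (0:ℝ) ≤ π / 2) ((zf_cont ha).continuousOn)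
    rwa [zf_zero ha, zf_pi2 ha] at h

lemma alg1 (a z s c D : ℝ) (hz0 : z ≠ 0) (ha1 : a ^ 2 - 1 ≠ 0) (ha0 : a ≠ 0)
    (hs2 : s ^ 2 = a ^ 2 * (z ^ 2 - 1) / (z ^ 2 * (a ^ 2 - 1)))
    (hc2 : c ^ 2 = (a ^ 2 - z ^ 2) / (z ^ 2 * (a ^ 2 - 1)))
    (hD : D = a ^ 2 / z ^ 2) :
    (a * (a ^ 2 - 1)) ^ 2 * (s ^ 2 * c ^ 2) / D ^ 3
      = z ^ 2 * (z ^ 2 - 1) * (a ^ 2 - z ^ 2) / a ^ 2 := by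
  rw [hs2, hc2, hD]
  field_simp

lemma alg2 (a t z : ℝ) (ha0 : a ≠ 0) (htz : t ^ 2 - z ^ 2 ≠ 0) (hz21 : z ^ 2 - 1 ≠ 0)
    (hzaa : z + a ≠ 0) :
    z ^ 2 * (z ^ 2 - 1) * (a ^ 2 - z ^ 2) / a ^ 2 *
        ((a - z) / ((t ^ 2 - z ^ 2) * (z ^ 2 - 1) * (z + a)))
      = (z * (a - z)) ^ 2 / (a ^ 2 * (t ^ 2 - z ^ 2)) := by
  field_simp
  ring

lemma alg2' (a t z : ℝ) (ha0 : a ≠ 0) (htz : t ^ 2 - z ^ 2 ≠ 0) (hz21 : z ^ 2 - 1 ≠ 0)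
    (hzaa : a - z ≠ 0) :
    z ^ 2 * (z ^ 2 - 1) * (a ^ 2 - z ^ 2) / a ^ 2 *
        ((a + z) / ((t ^ 2 - z ^ 2) * (z ^ 2 - 1) * (a - z)))
      = (z * (a + z)) ^ 2 / (a ^ 2 * (t ^ 2 - z ^ 2)) := by
  field_simp
  ring

lemma zf_sq_mul (ha : 1 < a) (θ : ℝ) : zf a θ ^ 2 * Df a θ = a ^ 2 := by
  unfold zf
  rw [div_pow, Real.sq_sqrt (Df_pos ha θ).le]
  exact div_mul_cancel₀ _ (ne_of_gt (Df_pos ha θ))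

lemma sin_sq_eq (ha : 1 < a) (hθ : θ ∈ Ioo 0 (π / 2)) :
    Real.sin θ ^ 2 = a ^ 2 * (zf a θ ^ 2 - 1) / (zf a θ ^ 2 * (a ^ 2 - 1)) := by
  have hz2D := zf_sq_mul ha θ
  obtain ⟨hz1, hza⟩ := zf_mem_Ioo ha hθ
  have hz0 : (0:ℝ) < zf a θ := by linarith
  have ha1 : (0:ℝ) < a ^ 2 - 1 := by nlinarith
  have hDf : Df a θ = a ^ 2 - (a ^ 2 - 1) * Real.sin θ ^ 2 := rfl
  rw [hDf] at hz2D
  rw [eq_div_iff (by positivity)]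
  nlinarith [hz2D]

lemma cos_sq_eq (ha : 1 < a) (hθ : θ ∈ Ioo 0 (π / 2)) :
    Real.cos θ ^ 2 = (a ^ 2 - zf a θ ^ 2) / (zf a θ ^ 2 * (a ^ 2 - 1)) := by
  have hs2 := sin_sq_eq ha hθ
  obtain ⟨hz1, hza⟩ := zf_mem_Ioo ha hθ
  have hz0 : (0:ℝ) < zf a θ := by linarith
  have ha1 : (0:ℝ) < a ^ 2 - 1 := by nlinarith
  have hpy := Real.sin_sq_add_cos_sq θ
  have hc : Real.cos θ ^ 2 = 1 - Real.sin θ ^ 2 := by linarith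
  rw [eq_div_iff (by positivity)] at hs2
  rw [eq_div_iff (by positivity), hc]
  linear_combination -hs2

lemma zd_sq_eq (ha : 1 < a) (hθ : θ ∈ Ioo 0 (π / 2)) :
    zd a θ ^ 2 = zf a θ ^ 2 * (zf a θ ^ 2 - 1) * (a ^ 2 - zf a θ ^ 2) / a ^ 2 := by
  have hz2D := zf_sq_mul ha θ
  obtain ⟨hz1, hza⟩ := zf_mem_Ioo ha hθ
  have hz0 : (0:ℝ) < zf a θ := by linarith
  have ha1 : (0:ℝ) < a ^ 2 - 1 := by nlinarith
  have ha0 : (0:ℝ) < a := by linarith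
  have hDpos := Df_pos ha θ
  have hD : Df a θ = a ^ 2 / zf a θ ^ 2 := by
    rw [eq_div_iff (by positivity)]
    linarith [hz2D]
  have hzd2 : zd a θ ^ 2 = (a * (a ^ 2 - 1)) ^ 2 * (Real.sin θ ^ 2 * Real.cos θ ^ 2)
      / Df a θ ^ 3 := by
    unfold zd
    rw [div_pow, mul_pow (Df a θ), Real.sq_sqrt hDpos.le]
    ring_nf
  rw [hzd2]
  exact alg1 a (zf a θ) _ _ _ hz0.ne' ha1.ne' ha0.ne' (sin_sq_eq ha hθ) (cos_sq_eq ha hθ) hD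

lemma zd_nonneg (ha : 1 < a) (hθ : θ ∈ Ioo 0 (π / 2)) : 0 ≤ zd a θ := by
  obtain ⟨hs0, hs1⟩ := sin_mem hθ
  have hc0 : (0:ℝ) < Real.cos θ := Real.cos_pos_of_mem_Ioo
    ⟨by linarith [Real.pi_pos, hθ.1], hθ.2⟩
  have hDpos := Df_pos ha θ
  have hSpos := sqrtDf_pos ha θ
  have ha1 : (0:ℝ) < a ^ 2 - 1 := by nlinarith
  have ha0 : (0:ℝ) < a := by linarith
  unfold zd
  exact le_of_lt (div_pos (by positivity) (by positivity))

lemma key4 (ha : 1 < a) (hat : a < t) (hθ : θ ∈ Ioo 0 (π / 2)) :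
    |zd a θ| * Real.sqrt ((a - zf a θ) /
        ((t ^ 2 - zf a θ ^ 2) * (zf a θ ^ 2 - 1) * (zf a θ + a))) =
      zf a θ * (a - zf a θ) / (a * Real.sqrt (t ^ 2 - zf a θ ^ 2)) := by
  have hzd2 := zd_sq_eq ha hθ
  have hzd0 := zd_nonneg ha hθ
  obtain ⟨hz1, hza⟩ := zf_mem_Ioo ha hθ
  set z := zf a θ with hzdef
  have hz0 : (0:ℝ) < z := by linarith
  have ha0 : (0:ℝ) < a := by linarith
  have hz21 : (0:ℝ) < z ^ 2 - 1 := by nlinarith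
  have htz : (0:ℝ) < t ^ 2 - z ^ 2 := by nlinarith
  have haz : (0:ℝ) < a - z := by linarith
  have hzaa : (0:ℝ) < z + a := by linarith
  have hX : (0:ℝ) ≤ (a - z) / ((t ^ 2 - z ^ 2) * (z ^ 2 - 1) * (z + a)) :=
    le_of_lt (div_pos haz (by positivity))
  have hL0 : (0:ℝ) ≤ |zd a θ| * Real.sqrt ((a - z) /
      ((t ^ 2 - z ^ 2) * (z ^ 2 - 1) * (z + a))) := by positivity
  have hR0 : (0:ℝ) ≤ z * (a - z) / (a * Real.sqrt (t ^ 2 - z ^ 2)) := by positivity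
  have hsq : (|zd a θ| * Real.sqrt ((a - z) /
      ((t ^ 2 - z ^ 2) * (z ^ 2 - 1) * (z + a)))) ^ 2
      = (z * (a - z) / (a * Real.sqrt (t ^ 2 - z ^ 2))) ^ 2 := by
    rw [mul_pow, sq_abs, Real.sq_sqrt hX, div_pow, mul_pow a, Real.sq_sqrt htz.le, hzd2]
    exact alg2 a t z ha0.ne' htz.ne' hz21.ne' hzaa.ne'
  rw [← Real.sqrt_sq hL0, ← Real.sqrt_sq hR0, hsq]

lemma key2 (ha : 1 < a) (hat : a < t) (hθ : θ ∈ Ioo 0 (π / 2)) :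
    |zd a θ| * Real.sqrt ((a + zf a θ) /
        ((t ^ 2 - zf a θ ^ 2) * (zf a θ ^ 2 - 1) * (a - zf a θ))) =
      zf a θ * (a + zf a θ) / (a * Real.sqrt (t ^ 2 - zf a θ ^ 2)) := by
  have hzd2 := zd_sq_eq ha hθ
  have hzd0 := zd_nonneg ha hθ
  obtain ⟨hz1, hza⟩ := zf_mem_Ioo ha hθ
  set z := zf a θ with hzdef
  have hz0 : (0:ℝ) < z := by linarith
  have ha0 : (0:ℝ) < a := by linarith
  have hz21 : (0:ℝ) < z ^ 2 - 1 := by nlinarith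
  have htz : (0:ℝ) < t ^ 2 - z ^ 2 := by nlinarith
  have haz : (0:ℝ) < a - z := by linarith
  have hzaa : (0:ℝ) < a + z := by linarith
  have hX : (0:ℝ) ≤ (a + z) / ((t ^ 2 - z ^ 2) * (z ^ 2 - 1) * (a - z)) :=
    le_of_lt (div_pos hzaa (by positivity))
  have hL0 : (0:ℝ) ≤ |zd a θ| * Real.sqrt ((a + z) /
      ((t ^ 2 - z ^ 2) * (z ^ 2 - 1) * (a - z))) := by positivity
  have hR0 : (0:ℝ) ≤ z * (a + z) / (a * Real.sqrt (t ^ 2 - z ^ 2)) := by positivity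
  have hsq : (|zd a θ| * Real.sqrt ((a + z) /
      ((t ^ 2 - z ^ 2) * (z ^ 2 - 1) * (a - z)))) ^ 2
      = (z * (a + z) / (a * Real.sqrt (t ^ 2 - z ^ 2))) ^ 2 := by
    rw [mul_pow, sq_abs, Real.sq_sqrt hX, div_pow, mul_pow a, Real.sq_sqrt htz.le, hzd2]
    exact alg2' a t z ha0.ne' htz.ne' hz21.ne' haz.ne'
  rw [← Real.sqrt_sq hL0, ← Real.sqrt_sq hR0, hsq]

lemma I4_eq (ha : 1 < a) (hat : a < t) :
    I4 a a t = ∫ θ in Ioo 0 (π / 2),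
      zf a θ * (a - zf a θ) / (a * Real.sqrt (t ^ 2 - zf a θ ^ 2)) := by
  rw [I4, intervalIntegral.integral_of_le (by linarith : (1:ℝ) ≤ a),
    MeasureTheory.integral_Ioc_eq_integral_Ioo, ← zf_image ha,
    MeasureTheory.integral_image_eq_integral_abs_deriv_smul measurableSet_Ioo
      (fun θ _ => (zf_hasDerivAt ha θ).hasDerivWithinAt) (zf_inj ha)]
  exact MeasureTheory.setIntegral_congr_fun measurableSet_Ioo
    (fun θ hθ => by rw [smul_eq_mul, key4 ha hat hθ])

lemma I2_eq (ha : 1 < a) (hat : a < t) :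
    I2 a a t = ∫ θ in Ioo 0 (π / 2),
      zf a θ * (a + zf a θ) / (a * Real.sqrt (t ^ 2 - zf a θ ^ 2)) := by
  have hneg := intervalIntegral.integral_comp_neg (a := (1:ℝ)) (b := a)
    (fun z => Real.sqrt ((a - z) / ((t ^ 2 - z ^ 2) * (z ^ 2 - 1) * (z + a))))
  rw [I2, ← hneg]
  have hfun : (fun x => Real.sqrt ((a - -x) / ((t ^ 2 - (-x) ^ 2) * ((-x) ^ 2 - 1) * (-x + a))))
      = fun x => Real.sqrt ((a + x) / ((t ^ 2 - x ^ 2) * (x ^ 2 - 1) * (a - x))) := by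
    funext x; congr 1; ring
  rw [show (fun x => Real.sqrt ((a - -x) / ((t ^ 2 - (-x) ^ 2) * ((-x) ^ 2 - 1) * (-x + a))))
      = fun x => Real.sqrt ((a + x) / ((t ^ 2 - x ^ 2) * (x ^ 2 - 1) * (a - x))) from hfun]
  rw [intervalIntegral.integral_of_le (by linarith : (1:ℝ) ≤ a),
    MeasureTheory.integral_Ioc_eq_integral_Ioo, ← zf_image ha,
    MeasureTheory.integral_image_eq_integral_abs_deriv_smul measurableSet_Ioo
      (fun θ _ => (zf_hasDerivAt ha θ).hasDerivWithinAt) (zf_inj ha)]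
  exact MeasureTheory.setIntegral_congr_fun measurableSet_Ioo
    (fun θ hθ => by rw [smul_eq_mul, key2 ha hat hθ])

lemma tz_pos (ha : 1 < a) (hat : a < t) (θ : ℝ) : 0 < t ^ 2 - zf a θ ^ 2 := by
  obtain ⟨h1, h2⟩ := zf_mem_Icc ha θ
  nlinarith

lemma phi_cont4 (ha : 1 < a) (hat : a < t) :
    Continuous (fun θ => zf a θ * (a - zf a θ) / (a * Real.sqrt (t ^ 2 - zf a θ ^ 2))) := by
  apply Continuous.div
  · exact (zf_cont ha).mul (continuous_const.sub (zf_cont ha))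
  · exact continuous_const.mul ((continuous_const.sub ((zf_cont ha).pow 2)).sqrt)
  · intro θ
    have := tz_pos ha hat θ
    have h0 : (0:ℝ) < a := by linarith
    positivity

lemma phi_cont2 (ha : 1 < a) (hat : a < t) :
    Continuous (fun θ => zf a θ * (a + zf a θ) / (a * Real.sqrt (t ^ 2 - zf a θ ^ 2))) := by
  apply Continuous.div
  · exact (zf_cont ha).mul (continuous_const.add (zf_cont ha))
  · exact continuous_const.mul ((continuous_const.sub ((zf_cont ha).pow 2)).sqrt)
  · intro θ
    have := tz_pos ha hat θ
    have h0 : (0:ℝ) < a := by linarith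
    positivity

lemma phi_sum (ha : 1 < a) (hat : a < t) (hθ : θ ∈ Ioo 0 (π / 2)) :
    zf a θ * (a + zf a θ) / (a * Real.sqrt (t ^ 2 - zf a θ ^ 2))
      + zf a θ * (a - zf a θ) / (a * Real.sqrt (t ^ 2 - zf a θ ^ 2))
      = 2 / Real.sqrt (t ^ 2 - 1) *
        (1 / Real.sqrt (1 - t ^ 2 * (a ^ 2 - 1) / (a ^ 2 * (t ^ 2 - 1)) * Real.sin θ ^ 2)) := by
  have hs2 := sin_sq_eq ha hθ
  obtain ⟨hz1, hza⟩ := zf_mem_Ioo ha hθ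
  set z := zf a θ with hzdef
  have hz0 : (0:ℝ) < z := by linarith
  have ha0 : (0:ℝ) < a := by linarith
  have ht1 : (0:ℝ) < t ^ 2 - 1 := by nlinarith
  have ha1 : (0:ℝ) < a ^ 2 - 1 := by nlinarith
  have htz : (0:ℝ) < t ^ 2 - z ^ 2 := by nlinarith
  have hw : 1 - t ^ 2 * (a ^ 2 - 1) / (a ^ 2 * (t ^ 2 - 1)) * Real.sin θ ^ 2
      = (t ^ 2 - z ^ 2) / (z ^ 2 * (t ^ 2 - 1)) := by
    rw [hs2]
    field_simp
    ring
  rw [hw, Real.sqrt_div htz.le, Real.sqrt_mul (by positivity) (t ^ 2 - 1),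
    Real.sqrt_sq hz0.le]
  have hS : (0:ℝ) < Real.sqrt (t ^ 2 - z ^ 2) := Real.sqrt_pos.mpr htz
  have hT : (0:ℝ) < Real.sqrt (t ^ 2 - 1) := Real.sqrt_pos.mpr ht1
  field_simp
  ring


end Stmt15Aux

section
open Set
/-- `I₂(a,a;t) + I₄(a,a;t) = 2 K(m₂)/√(t²−1)` with `m₂ = t²(a²−1)/(a²(t²−1))`. -/
theorem stmt15 (a t : ℝ) (ha : 1 < a) (hat : a < t) :
    I2 a a t + I4 a a t
      = (2 / Real.sqrt (t ^ 2 - 1)) * Kint (t ^ 2 * (a ^ 2 - 1) / (a ^ 2 * (t ^ 2 - 1))) := by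
  have h2 := I2_eq ha hat
  have h4 := I4_eq ha hat
  have hint2 : IntegrableOn
      (fun θ => zf a θ * (a + zf a θ) / (a * Real.sqrt (t ^ 2 - zf a θ ^ 2)))
      (Ioo 0 (π / 2)) volume :=
    ((phi_cont2 ha hat).integrableOn_Icc).mono_set Ioo_subset_Icc_self
  have hint4 : IntegrableOn
      (fun θ => zf a θ * (a - zf a θ) / (a * Real.sqrt (t ^ 2 - zf a θ ^ 2)))
      (Ioo 0 (π / 2)) volume :=
    ((phi_cont4 ha hat).integrableOn_Icc).mono_set Ioo_subset_Icc_self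
  rw [h2, h4, ← MeasureTheory.integral_add hint2 hint4]
  rw [MeasureTheory.setIntegral_congr_fun measurableSet_Ioo
    (fun θ hθ => phi_sum ha hat hθ)]
  rw [MeasureTheory.integral_const_mul]
  rw [Kint, intervalIntegral.integral_of_le (by positivity : (0:ℝ) ≤ π / 2),
    MeasureTheory.integral_Ioc_eq_integral_Ioo]
end
end

section
/- There exists a real number m with 0 < m < 1 such that K(m) = 2·E(m), where K(m) = ∫₀^{π/2} (1 − m sin²θ)^{−1/2} dθ and E(m) = ∫₀^{π/2} (1 − m sin²θ)^{1/2} dθ. -/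
open MeasureTheory intervalIntegral Real Filter Topology

namespace Stmt19Aux

lemma aux_pos {m : ℝ} (hm : m < 1) (θ : ℝ) : 0 < 1 - m * Real.sin θ ^ 2 := by
  have h1 : Real.sin θ ^ 2 ≤ 1 := Real.sin_sq_le_one θ
  have h0 : 0 ≤ Real.sin θ ^ 2 := sq_nonneg _
  rcases le_or_gt m 0 with h | h
  · nlinarith
  · nlinarith

lemma contK {m : ℝ} (hm : m < 1) :
    Continuous fun θ : ℝ => 1 / Real.sqrt (1 - m * Real.sin θ ^ 2) := by
  apply continuous_const.div
  · fun_prop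
  · intro θ
    exact (Real.sqrt_pos.2 (aux_pos hm θ)).ne'

/-- the small parameter -/
noncomputable def s : ℝ := π / 2 * Real.exp (-4)

lemma hs : 0 < s := by unfold s; positivity

lemma hs1 : s < 1 := by
  have h1 : Real.exp (-4) = (Real.exp 4)⁻¹ := by rw [Real.exp_neg]
  have h2 : (5:ℝ) < Real.exp 4 := by
    have := Real.add_one_lt_exp (x := 4) (by norm_num)
    linarith
  have h3 : Real.exp (-4) < 1/5 := by
    rw [h1]
    rw [inv_lt_comm₀ (by linarith) (by norm_num)]
    · norm_num; linarith
  have hpi : π < 3.15 := Real.pi_lt_d2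
  have : s < π / 2 * (1/5) := by
    have := Real.pi_pos
    unfold s
    apply mul_lt_mul_of_pos_left h3 (by positivity)
  unfold s at *
  nlinarith [Real.pi_pos]

noncomputable def ε : ℝ := s ^ 2

lemma hε0 : 0 < ε := by have := hs; unfold ε; positivity

lemma hε1 : ε < 1 := by
  have := hs; have := hs1
  unfold ε
  nlinarith

noncomputable def m₀ : ℝ := 1 - ε

lemma hm₀0 : 0 < m₀ := by have := hε1; unfold m₀; linarith
lemma hm₀1 : m₀ < 1 := by have := hε0; unfold m₀; linarith

lemma denom_ge {m θ : ℝ} (hm0 : 0 ≤ m) (hm1 : m ≤ m₀) :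
    ε ≤ 1 - m * Real.sin θ ^ 2 := by
  have h1 : Real.sin θ ^ 2 ≤ 1 := Real.sin_sq_le_one θ
  have h0 : 0 ≤ Real.sin θ ^ 2 := sq_nonneg _
  have : m ≤ 1 - ε := hm1
  nlinarith

/-- the modified (globally continuous) K integrand family -/
noncomputable def G (m : ℝ) : ℝ :=
  ∫ θ in (0:ℝ)..(π / 2), 1 / Real.sqrt (max (1 - m * Real.sin θ ^ 2) ε)

lemma contG : Continuous G := by
  apply continuous_parametric_intervalIntegral_of_continuous'
  apply continuous_const.div
  · fun_prop
  · rintro ⟨m, θ⟩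
    have : (0:ℝ) < max (1 - m * Real.sin θ ^ 2) ε := lt_of_lt_of_le hε0 (le_max_right _ _)
    exact (Real.sqrt_pos.2 this).ne'

lemma G_eq {m : ℝ} (hm0 : 0 ≤ m) (hm1 : m ≤ m₀) : Kint m = G m := by
  unfold Kint G
  apply intervalIntegral.integral_congr
  intro θ _
  simp only [max_eq_left (denom_ge hm0 hm1)]

lemma contE : Continuous Eint := by
  apply continuous_parametric_intervalIntegral_of_continuous'
  fun_prop

lemma Kint_zero : Kint 0 = π / 2 := by
  simp [Kint]

lemma Eint_zero : Eint 0 = π / 2 := by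
  simp [Eint]

lemma Eint_le {m : ℝ} (hm0 : 0 ≤ m) (hm1 : m < 1) : Eint m ≤ π / 2 := by
  have h := Real.pi_pos
  have : Eint m ≤ ∫ _θ in (0:ℝ)..(π / 2), (1:ℝ) := by
    apply intervalIntegral.integral_mono_on (by linarith)
    · exact Continuous.intervalIntegrable (by fun_prop :
        Continuous fun θ : ℝ => Real.sqrt (1 - m * Real.sin θ ^ 2)) _ _
    · exact intervalIntegrable_const
    · intro θ _
      apply Real.sqrt_le_one.2
      have h1 : 0 ≤ Real.sin θ ^ 2 := sq_nonneg _
      nlinarith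
  simpa using this

lemma hasDeriv_F (θ : ℝ) :
    HasDerivAt (fun t : ℝ => -Real.arsinh ((π / 2 - t) / s))
      (1 / Real.sqrt (s ^ 2 + (π / 2 - θ) ^ 2)) θ := by
  have hs' := hs
  have h1 : HasDerivAt (fun t : ℝ => (π / 2 - t) / s) (-1 / s) θ := by
    have : HasDerivAt (fun t : ℝ => π / 2 - t) (-1) θ := by
      simpa using (hasDerivAt_id θ).const_sub (π / 2)
    simpa [div_eq_mul_inv] using this.div_const s
  have h2 := (Real.hasDerivAt_arsinh ((π / 2 - θ) / s)).comp θ h1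
  have h3 := h2.neg
  refine HasDerivAt.congr_deriv h3 ?_
  symm
  have hy : (0:ℝ) < 1 + ((π / 2 - θ) / s) ^ 2 := by positivity
  have key : Real.sqrt (s ^ 2 + (π / 2 - θ) ^ 2)
      = s * Real.sqrt (1 + ((π / 2 - θ) / s) ^ 2) := by
    rw [← Real.sqrt_sq hs'.le, ← Real.sqrt_mul (sq_nonneg s)]
    congr 1
    field_simp
    ring
    exact Real.sq_sqrt (sq_nonneg s)
  rw [key]
  have hsq : Real.sqrt (1 + ((π / 2 - θ) / s) ^ 2) ≠ 0 := (Real.sqrt_pos.2 hy).ne'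
  field_simp

lemma integral_comparison :
    (∫ θ in (0:ℝ)..(π / 2), 1 / Real.sqrt (s ^ 2 + (π / 2 - θ) ^ 2))
      = Real.arsinh (Real.exp 4) := by
  have hs' := hs
  have h := intervalIntegral.integral_eq_sub_of_hasDerivAt
    (f := fun t : ℝ => -Real.arsinh ((π / 2 - t) / s))
    (f' := fun θ => 1 / Real.sqrt (s ^ 2 + (π / 2 - θ) ^ 2))
    (a := 0) (b := π / 2)
    (fun θ _ => hasDeriv_F θ) ?_
  · rw [h]
    have hv : π / 2 / s = Real.exp 4 := by
      unfold s
      rw [Real.exp_neg]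
      field_simp
    simp [hv]
  · apply Continuous.intervalIntegrable
    apply continuous_const.div
    · fun_prop
    · intro θ
      have : (0:ℝ) < s ^ 2 + (π / 2 - θ) ^ 2 := by positivity
      exact (Real.sqrt_pos.2 this).ne'

lemma Kint_m₀_large : 4 ≤ Kint m₀ := by
  have hs' := hs
  have hle : (∫ θ in (0:ℝ)..(π / 2), 1 / Real.sqrt (s ^ 2 + (π / 2 - θ) ^ 2)) ≤ Kint m₀ := by
    unfold Kint
    apply intervalIntegral.integral_mono_on (by positivity)
    · apply Continuous.intervalIntegrable
      apply continuous_const.div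
      · fun_prop
      · intro θ
        have : (0:ℝ) < s ^ 2 + (π / 2 - θ) ^ 2 := by positivity
        exact (Real.sqrt_pos.2 this).ne'
    · exact (contK hm₀1).intervalIntegrable _ _
    · intro θ hθ
      obtain ⟨h0, h1⟩ := hθ
      have hcos : Real.cos θ ≤ π / 2 - θ := by
        have := Real.sin_le (x := π / 2 - θ) (by linarith)
        rwa [Real.sin_pi_div_two_sub] at this
      have hcos0 : 0 ≤ Real.cos θ := Real.cos_nonneg_of_mem_Icc ⟨by linarith, h1⟩
      have hcos2 : Real.cos θ ^ 2 ≤ (π / 2 - θ) ^ 2 := by nlinarith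
      have hkey : 1 - m₀ * Real.sin θ ^ 2 ≤ s ^ 2 + (π / 2 - θ) ^ 2 := by
        have hpyth : Real.sin θ ^ 2 + Real.cos θ ^ 2 = 1 := Real.sin_sq_add_cos_sq θ
        have hsin1 : Real.sin θ ^ 2 ≤ 1 := Real.sin_sq_le_one θ
        have : 1 - m₀ * Real.sin θ ^ 2 = Real.cos θ ^ 2 + ε * Real.sin θ ^ 2 := by
          unfold m₀; ring_nf; nlinarith [hpyth]
        rw [this]
        have hε := hε0
        have : ε * Real.sin θ ^ 2 ≤ ε := by nlinarith
        unfold ε at *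
        nlinarith
      have hd := aux_pos hm₀1 θ
      apply one_div_le_one_div_of_le (Real.sqrt_pos.2 hd)
      exact Real.sqrt_le_sqrt hkey
  have harsinh : (4:ℝ) ≤ Real.arsinh (Real.exp 4) := by
    rw [Real.arsinh]
    have h1 : Real.exp 4 ≤ Real.exp 4 + Real.sqrt (1 + Real.exp 4 ^ 2) :=
      le_add_of_nonneg_right (Real.sqrt_nonneg _)
    calc (4:ℝ) = Real.log (Real.exp 4) := (Real.log_exp 4).symm
      _ ≤ _ := Real.log_le_log (Real.exp_pos 4) h1
  calc (4:ℝ) ≤ Real.arsinh (Real.exp 4) := harsinh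
    _ = _ := integral_comparison.symm
    _ ≤ Kint m₀ := hle

end Stmt19Aux

open Stmt19Aux in
/-- There is `0 < m < 1` with `K(m) = 2 E(m)`. -/
theorem stmt19 : ∃ m : ℝ, 0 < m ∧ m < 1 ∧ Kint m = 2 * Eint m := by
  have hpi := Real.pi_pos
  have hpi' := Real.pi_lt_d2
  set f : ℝ → ℝ := fun m => G m - 2 * Eint m with hf
  have hfc : Continuous f := contG.sub (continuous_const.mul contE)
  have hf0 : f 0 < 0 := by
    have : G 0 = Kint 0 := (G_eq le_rfl hm₀0.le).symm
    simp only [hf]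
    rw [this, Kint_zero, Eint_zero]
    linarith
  have hfm : 0 < f m₀ := by
    have h1 : Kint m₀ = G m₀ := G_eq hm₀0.le le_rfl
    have h2 := Kint_m₀_large
    have h3 := Eint_le hm₀0.le hm₀1
    simp only [hf]
    rw [← h1]
    linarith
  have hIvt := intermediate_value_Icc hm₀0.le hfc.continuousOn
  have h0mem : (0:ℝ) ∈ Set.Icc (f 0) (f m₀) := ⟨hf0.le, hfm.le⟩
  obtain ⟨m, hm, hfm0⟩ := hIvt h0mem
  refine ⟨m, ?_, lt_of_le_of_lt hm.2 hm₀1, ?_⟩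
  · rcases lt_or_eq_of_le hm.1 with h | h
    · exact h
    · exfalso; rw [← h] at hfm0; rw [hfm0] at hf0; exact lt_irrefl 0 hf0
  · have : Kint m = G m := G_eq hm.1 hm.2
    rw [this]
    simp only [hf] at hfm0
    linarith
end
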